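/- Every simplicial abelian group satisfies the Kan extension condition: every map of simplicial sets from the k-horn Λ^k[n] to the underlying simplicial set of a simplicial abelian group extends to a map from Δ[n]. -/

import Mathlib

open CategoryTheory

universe u

open Simplicial in
/-- The definition of `SSet.KanComplex` as it stood in Mathlib of December 2024:
horn filling for every `n : ℕ` and every `i : Fin (n + 1)` (including `n = 0`). -/
class SSet.KanComplexOld (S : SSet.{u}) : Prop where
  hornFilling : ∀ ⦃n : ℕ⦄ ⦃i : Fin (n+1)⦄ (σ₀ : (Λ[n, i] : SSet.{u}) ⟶ S),
    ∃ σ : Δ[n] ⟶ S, σ₀ = Λ[n, i].ι ≫ σ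

open CategoryTheory Simplicial Opposite SSet

namespace MooreKan

variable (A : SimplicialObject AddCommGrpCat.{0})

lemma dd {n : ℕ} {i j : Fin (n + 2)} (H : i ≤ j) (v : ↥(A.obj (op ⦋n + 2⦌))) :
    A.δ i (A.δ j.succ v) = A.δ j (A.δ i.castSucc v) := by
  have h := SimplicialObject.δ_comp_δ (X := A) H
  calc A.δ i (A.δ j.succ v) = (A.δ j.succ ≫ A.δ i) v := rfl
    _ = (A.δ i.castSucc ≫ A.δ j) v := by rw [h]
    _ = A.δ j (A.δ i.castSucc v) := rfl

lemma ds_self {n : ℕ} {i : Fin (n + 1)} (a : ↥(A.obj (op ⦋n⦌))) :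
    A.δ i.castSucc (A.σ i a) = a := by
  have h := SimplicialObject.δ_comp_σ_self (X := A) (i := i)
  calc A.δ i.castSucc (A.σ i a) = (A.σ i ≫ A.δ i.castSucc) a := rfl
    _ = (𝟙 (A.obj (op ⦋n⦌))) a := by rw [h]
    _ = a := rfl

lemma ds_succ {n : ℕ} {i : Fin (n + 1)} (a : ↥(A.obj (op ⦋n⦌))) :
    A.δ i.succ (A.σ i a) = a := by
  have h := SimplicialObject.δ_comp_σ_succ (X := A) (i := i)
  calc A.δ i.succ (A.σ i a) = (A.σ i ≫ A.δ i.succ) a := rfl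
    _ = (𝟙 (A.obj (op ⦋n⦌))) a := by rw [h]
    _ = a := rfl

lemma ds_le {n : ℕ} {i : Fin (n + 2)} {j : Fin (n + 1)} (H : i ≤ j.castSucc)
    (a : ↥(A.obj (op ⦋n + 1⦌))) :
    A.δ i.castSucc (A.σ j.succ a) = A.σ j (A.δ i a) := by
  have h := SimplicialObject.δ_comp_σ_of_le (X := A) H
  calc A.δ i.castSucc (A.σ j.succ a) = (A.σ j.succ ≫ A.δ i.castSucc) a := rfl
    _ = (A.δ i ≫ A.σ j) a := by rw [h]
    _ = A.σ j (A.δ i a) := rfl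

lemma ds_gt {n : ℕ} {i : Fin (n + 2)} {j : Fin (n + 1)} (H : j.castSucc < i)
    (a : ↥(A.obj (op ⦋n + 1⦌))) :
    A.δ i.succ (A.σ j.castSucc a) = A.σ j (A.δ i a) := by
  have h := SimplicialObject.δ_comp_σ_of_gt (X := A) H
  calc A.δ i.succ (A.σ j.castSucc a) = (A.σ j.castSucc ≫ A.δ i.succ) a := rfl
    _ = (A.δ i ≫ A.σ j) a := by rw [h]
    _ = A.σ j (A.δ i a) := rfl

section Steps

variable {n : ℕ} {i : Fin (n + 3)}
  (x : ∀ j : Fin (n + 3), j ≠ i → ↥(A.obj (op ⦋n + 1⦌)))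

/-- congruence for the family `x` -/
lemma xeq {j j' : Fin (n + 3)} (h : j = j') (hj : j ≠ i) (hj' : j' ≠ i) :
    x j hj = x j' hj' := by subst h; rfl

/-- One step of the upward pass of Moore's filling algorithm. -/
lemma step1
    (compat : ∀ (p q : Fin (n + 2)), p ≤ q → ∀ (hp : p.castSucc ≠ i) (hq : q.succ ≠ i),
      A.δ p (x q.succ hq) = A.δ q (x p.castSucc hp))
    (rs : Fin (n + 2)) (hri : (rs : ℕ) < (i : ℕ)) (v : ↥(A.obj (op ⦋n + 2⦌)))
    (hv : ∀ (j : Fin (n + 3)) (hj : j ≠ i), (j : ℕ) < (rs : ℕ) → A.δ j v = x j hj) :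
    ∃ u : ↥(A.obj (op ⦋n + 2⦌)),
      ∀ (j : Fin (n + 3)) (hj : j ≠ i), (j : ℕ) < (rs : ℕ) + 1 → A.δ j u = x j hj := by
  have hr : rs.castSucc ≠ i := by
    intro h
    rw [Fin.ext_iff] at h
    simp only [Fin.coe_castSucc] at h
    omega
  refine ⟨v + A.σ rs (x rs.castSucc hr - A.δ rs.castSucc v), ?_⟩
  intro j hj hjb
  by_cases hcase : (j : ℕ) = (rs : ℕ)
  · have hj' : j = rs.castSucc := Fin.ext (by simpa using hcase)
    subst hj'
    rw [map_add, ds_self]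
    have : x rs.castSucc hj = x rs.castSucc hr := rfl
    rw [this]; abel
  · have hjr : (j : ℕ) < (rs : ℕ) := by omega
    have hrv : (rs : ℕ) ≤ n + 1 := by omega
    set j0 : Fin (n + 2) := ⟨(j : ℕ), by omega⟩ with hj0def
    have hjj : j = j0.castSucc := Fin.ext (by simp [hj0def])
    set c' : Fin (n + 1) := ⟨(rs : ℕ) - 1, by omega⟩ with hc'def
    have hrs : rs = c'.succ := by
      rw [Fin.ext_iff]; simp [hc'def]; omega
    set q1 : Fin (n + 2) := ⟨(rs : ℕ) - 1, by omega⟩ with hq1def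
    have e1 : q1.succ = rs.castSucc := by
      rw [Fin.ext_iff]; simp [hq1def]; omega
    have hji0 : j0.castSucc ≠ i := by rw [← hjj]; exact hj
    have hq1i : q1.succ ≠ i := by rw [e1]; exact hr
    have hz : A.δ j0 (x rs.castSucc hr - A.δ rs.castSucc v) = 0 := by
      rw [map_sub]
      have h1 : A.δ j0 (x rs.castSucc hr) = A.δ q1 (x j0.castSucc hji0) := by
        have hc := compat j0 q1 (by rw [Fin.le_def]; simp [hj0def, hq1def]; omega) hji0 hq1i
        rw [← hc]
        exact congrArg _ (xeq A x e1.symm hr hq1i)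
      have h2 : A.δ j0 (A.δ rs.castSucc v) = A.δ q1 (x j0.castSucc hji0) := by
        have hdd := dd A (i := j0) (j := q1)
          (by rw [Fin.le_def]; simp [hj0def, hq1def]; omega) v
        rw [e1] at hdd
        rw [hdd]
        exact congrArg _ (hv j0.castSucc hji0 (by simp [hj0def]; omega))
      rw [h1, h2, sub_self]
    have hds : ∀ z : ↥(A.obj (op ⦋n + 1⦌)),
        A.δ j (A.σ rs z) = A.σ c' (A.δ j0 z) := by
      intro z
      rw [hjj, hrs]
      exact ds_le A (by rw [Fin.le_def]; simp [hj0def, hc'def]; omega) z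
    rw [map_add, hds, hz, map_zero, add_zero]
    exact hv j hj hjr

/-- One step of the downward pass of Moore's filling algorithm. -/
lemma step2
    (compat : ∀ (p q : Fin (n + 2)), p ≤ q → ∀ (hp : p.castSucc ≠ i) (hq : q.succ ≠ i),
      A.δ p (x q.succ hq) = A.δ q (x p.castSucc hp))
    (rs : Fin (n + 2)) (hir : (i : ℕ) ≤ (rs : ℕ)) (v : ↥(A.obj (op ⦋n + 2⦌)))
    (hlow : ∀ (j : Fin (n + 3)) (hj : j ≠ i), (j : ℕ) < (i : ℕ) → A.δ j v = x j hj)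
    (hhigh : ∀ (j : Fin (n + 3)) (hj : j ≠ i), (rs : ℕ) + 1 < (j : ℕ) → A.δ j v = x j hj) :
    ∃ u : ↥(A.obj (op ⦋n + 2⦌)),
      (∀ (j : Fin (n + 3)) (hj : j ≠ i), (j : ℕ) < (i : ℕ) → A.δ j u = x j hj) ∧
      (∀ (j : Fin (n + 3)) (hj : j ≠ i), (rs : ℕ) < (j : ℕ) → A.δ j u = x j hj) := by
  have hr : rs.succ ≠ i := by
    intro h
    rw [Fin.ext_iff] at h
    simp only [Fin.val_succ] at h
    omega
  refine ⟨v + A.σ rs (x rs.succ hr - A.δ rs.succ v), ?_, ?_⟩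
  · -- lower faces are preserved
    intro j hj hji
    have hjr : (j : ℕ) < (rs : ℕ) := by omega
    have hrpos : 0 < (rs : ℕ) := by omega
    set j0 : Fin (n + 2) := ⟨(j : ℕ), by omega⟩ with hj0def
    have hjj : j = j0.castSucc := Fin.ext (by simp [hj0def])
    set c' : Fin (n + 1) := ⟨(rs : ℕ) - 1, by omega⟩ with hc'def
    have hrs : rs = c'.succ := by
      rw [Fin.ext_iff]; simp [hc'def]; omega
    have hji0 : j0.castSucc ≠ i := by rw [← hjj]; exact hj
    have hz : A.δ j0 (x rs.succ hr - A.δ rs.succ v) = 0 := by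
      rw [map_sub]
      have h1 : A.δ j0 (x rs.succ hr) = A.δ rs (x j0.castSucc hji0) :=
        compat j0 rs (by rw [Fin.le_def]; simp [hj0def]; omega) hji0 hr
      have h2 : A.δ j0 (A.δ rs.succ v) = A.δ rs (x j0.castSucc hji0) := by
        have hdd := dd A (i := j0) (j := rs)
          (by rw [Fin.le_def]; simp [hj0def]; omega) v
        rw [hdd]
        exact congrArg _ (hlow j0.castSucc hji0 (by simp [hj0def]; omega))
      rw [h1, h2, sub_self]
    have hds : ∀ z : ↥(A.obj (op ⦋n + 1⦌)),
        A.δ j (A.σ rs z) = A.σ c' (A.δ j0 z) := by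
      intro z
      rw [hjj, hrs]
      exact ds_le A (by rw [Fin.le_def]; simp [hj0def, hc'def]; omega) z
    rw [map_add, hds, hz, map_zero, add_zero]
    exact hlow j hj hji
  · -- upper faces, including the new one
    intro j hj hjb
    by_cases hcase : (j : ℕ) = (rs : ℕ) + 1
    · have hj' : j = rs.succ := by rw [Fin.ext_iff]; simpa using hcase
      subst hj'
      rw [map_add, ds_succ]
      have : x rs.succ hj = x rs.succ hr := rfl
      rw [this]; abel
    · have hjr : (rs : ℕ) + 1 < (j : ℕ) := by omega
      have hjle : (j : ℕ) ≤ n + 2 := by omega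
      have hrn : (rs : ℕ) ≤ n := by omega
      set j1 : Fin (n + 2) := ⟨(j : ℕ) - 1, by omega⟩ with hj1def
      have hjj : j = j1.succ := by
        rw [Fin.ext_iff]; simp [hj1def]; omega
      set c' : Fin (n + 1) := ⟨(rs : ℕ), by omega⟩ with hc'def
      have hrs : rs = c'.castSucc := by
        rw [Fin.ext_iff]; simp [hc'def]
      set p : Fin (n + 2) := ⟨(rs : ℕ) + 1, by omega⟩ with hpdef
      have ep : p.castSucc = rs.succ := by
        rw [Fin.ext_iff]; simp [hpdef]
      have hj1i : j1.succ ≠ i := by rw [← hjj]; exact hj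
      have hpi : p.castSucc ≠ i := by rw [ep]; exact hr
      have hz : A.δ j1 (x rs.succ hr - A.δ rs.succ v) = 0 := by
        rw [map_sub]
        have h1 : A.δ j1 (x rs.succ hr) = A.δ p (x j1.succ hj1i) := by
          have hc := compat p j1 (by rw [Fin.le_def]; simp [hpdef, hj1def]; omega) hpi hj1i
          rw [show x rs.succ hr = x p.castSucc hpi from xeq A x ep.symm hr hpi]
          exact hc.symm
        have h2 : A.δ j1 (A.δ rs.succ v) = A.δ p (x j1.succ hj1i) := by
          have hdd := dd A (i := p) (j := j1)
            (by rw [Fin.le_def]; simp [hpdef, hj1def]; omega) v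
          rw [ep] at hdd
          rw [← hdd]
          exact congrArg _ (hhigh j1.succ hj1i (by simp [hj1def]; omega))
        rw [h1, h2, sub_self]
      have hds : ∀ z : ↥(A.obj (op ⦋n + 1⦌)),
          A.δ j (A.σ rs z) = A.σ c' (A.δ j1 z) := by
        intro z
        rw [hjj, hrs]
        exact ds_gt A (by rw [Fin.lt_def]; simp [hj1def, hc'def]; omega) z
      rw [map_add, hds, hz, map_zero, add_zero]
      exact hhigh j hj hjr

end Steps

/-- Moore's filling lemma: compatible families of faces of a horn in a simplicial
abelian group can be filled. -/
lemma filler {n : ℕ} (i : Fin (n + 3))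
    (x : ∀ j : Fin (n + 3), j ≠ i → ↥(A.obj (op ⦋n + 1⦌)))
    (compat : ∀ (p q : Fin (n + 2)), p ≤ q → ∀ (hp : p.castSucc ≠ i) (hq : q.succ ≠ i),
      A.δ p (x q.succ hq) = A.δ q (x p.castSucc hp)) :
    ∃ y : ↥(A.obj (op ⦋n + 2⦌)), ∀ (j : Fin (n + 3)) (hj : j ≠ i), A.δ j y = x j hj := by
  have phase1 : ∀ b : ℕ, b ≤ (i : ℕ) → ∃ v : ↥(A.obj (op ⦋n + 2⦌)),
      ∀ (j : Fin (n + 3)) (hj : j ≠ i), (j : ℕ) < b → A.δ j v = x j hj := by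
    intro b
    induction b with
    | zero => exact fun _ => ⟨0, fun j hj h => absurd h (Nat.not_lt_zero _)⟩
    | succ b ih =>
      intro hb
      obtain ⟨v, hv⟩ := ih (Nat.le_of_succ_le hb)
      have hbn : b < n + 2 := by
        have := i.isLt; omega
      obtain ⟨u, hu⟩ := step1 A x compat ⟨b, hbn⟩ (by simpa using hb) v (by simpa using hv)
      exact ⟨u, by simpa using hu⟩
  have phase2 : ∀ t : ℕ, t ≤ n + 2 - (i : ℕ) → ∃ v : ↥(A.obj (op ⦋n + 2⦌)),
      (∀ (j : Fin (n + 3)) (hj : j ≠ i), (j : ℕ) < (i : ℕ) → A.δ j v = x j hj) ∧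
      (∀ (j : Fin (n + 3)) (hj : j ≠ i), n + 2 - t < (j : ℕ) → A.δ j v = x j hj) := by
    intro t
    induction t with
    | zero =>
      intro _
      obtain ⟨v, hv⟩ := phase1 (i : ℕ) le_rfl
      exact ⟨v, hv, fun j hj h => absurd h (by have := j.isLt; omega)⟩
    | succ t ih =>
      intro ht
      obtain ⟨v, hlow, hhigh⟩ := ih (by omega)
      have hii := i.isLt
      have hbn : n + 1 - t < n + 2 := by omega
      obtain ⟨u, hu1, hu2⟩ := step2 A x compat ⟨n + 1 - t, hbn⟩ (by simp; omega) v hlow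
        (by intro j hj h; exact hhigh j hj (by simp at h; omega))
      refine ⟨u, hu1, ?_⟩
      intro j hj h
      exact hu2 j hj (by simp; omega)
  obtain ⟨v, hlow, hhigh⟩ := phase2 (n + 2 - (i : ℕ)) le_rfl
  refine ⟨v, ?_⟩
  intro j hj
  rcases lt_or_gt_of_ne (fun h : (j : ℕ) = (i : ℕ) => hj (Fin.ext h)) with h | h
  · exact hlow j hj h
  · exact hhigh j hj (by have := i.isLt; omega)

/-- Filling one-dimensional horns. -/
lemma filler1 (i : Fin 2) (x : ∀ j : Fin 2, j ≠ i → ↥(A.obj (op ⦋0⦌))) :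
    ∃ y : ↥(A.obj (op ⦋1⦌)), ∀ (j : Fin 2) (hj : j ≠ i), A.δ j y = x j hj := by
  by_cases hi : i = 0
  · subst hi
    refine ⟨A.σ 0 (x 1 one_ne_zero), ?_⟩
    intro j hj
    have hj1 : j = 1 := by
      rcases Fin.exists_fin_two.mp ⟨j, rfl⟩ with h | h
      · exact absurd h hj
      · exact h
    subst hj1
    exact (ds_succ A (i := 0) (x 1 one_ne_zero)).trans rfl
  · have hi1 : i = 1 := by
      rcases Fin.exists_fin_two.mp ⟨i, rfl⟩ with h | h
      · exact absurd h hi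
      · exact h
    subst hi1
    refine ⟨A.σ 0 (x 0 zero_ne_one), ?_⟩
    intro j hj
    have hj0 : j = 0 := by
      rcases Fin.exists_fin_two.mp ⟨j, rfl⟩ with h | h
      · exact h
      · exact absurd h hj
    subst hj0
    exact (ds_self A (i := 0) (x 0 zero_ne_one)).trans rfl

/-- The morphism `Δ[n] ⟶ S` associated with an `n`-simplex of `S`. -/
def toHom (S : SSet.{0}) {n : ℕ} (y : S _⦋n⦌) : Δ[n] ⟶ S where
  app m := TypeCat.ofHom fun α => S.map ((stdSimplex.objEquiv) α).op y
  naturality m m' f := by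
    ext α
    show S.map ((stdSimplex.objEquiv) (Δ[n].map f α)).op y
      = S.map f (S.map ((stdSimplex.objEquiv) α).op y)
    have h : (stdSimplex.objEquiv) (Δ[n].map f α)
        = f.unop ≫ (stdSimplex.objEquiv) α := by
      rw [stdSimplex.map_apply, Equiv.apply_symm_apply]
    rw [h]
    have : (f.unop ≫ (stdSimplex.objEquiv) α).op
        = ((stdSimplex.objEquiv) α).op ≫ f := rfl
    rw [this, FunctorToTypes.map_comp_apply]

lemma toHom_face (S : SSet.{0}) {n : ℕ} (y : S _⦋n + 1⦌) (i j : Fin (n + 2)) (h : j ≠ i) :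
    (Λ[n + 1, i].ι ≫ toHom S y).app (op ⦋n⦌) (horn.face i j h)
      = S.map (SimplexCategory.δ j).op y := by
  show S.map ((stdSimplex.objEquiv.{0})
    ((stdSimplex.objEquiv.{0}).symm (SimplexCategory.δ j))).op y = _
  rw [Equiv.apply_symm_apply]

/-- The compatibility of the faces of a horn in a simplicial abelian group. -/
lemma horn_compat {m : ℕ} (i : Fin (m + 3))
    (σ₀ : (Λ[m + 2, i] : SSet) ⟶ ((SimplicialObject.whiskering AddCommGrpCat (Type)).obj
      (forget AddCommGrpCat)).obj A)
    (p q : Fin (m + 2)) (hpq : p ≤ q) (hp : p.castSucc ≠ i) (hq : q.succ ≠ i) :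
    A.δ p (σ₀.app (op ⦋m + 1⦌) (horn.face i q.succ hq))
      = A.δ q (σ₀.app (op ⦋m + 1⦌) (horn.face i p.castSucc hp)) := by
  have key : (Λ[m + 2, i] : SSet).map (SimplexCategory.δ p).op (horn.face i q.succ hq)
      = (Λ[m + 2, i] : SSet).map (SimplexCategory.δ q).op (horn.face i p.castSucc hp) := by
    apply Subtype.ext
    show Δ[m + 2].map (SimplexCategory.δ p).op
        ((stdSimplex.objEquiv.{0}).symm (SimplexCategory.δ q.succ))
      = Δ[m + 2].map (SimplexCategory.δ q).op
        ((stdSimplex.objEquiv.{0}).symm (SimplexCategory.δ p.castSucc))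
    rw [stdSimplex.map_apply, stdSimplex.map_apply, Equiv.apply_symm_apply,
      Equiv.apply_symm_apply]
    exact congrArg _ (SimplexCategory.δ_comp_δ hpq)
  have n1 := ConcreteCategory.congr_hom (σ₀.naturality (SimplexCategory.δ p).op) (horn.face i q.succ hq)
  have n2 := ConcreteCategory.congr_hom (σ₀.naturality (SimplexCategory.δ q).op) (horn.face i p.castSucc hp)
  exact n1.symm.trans ((congrArg (fun z => σ₀.app (op ⦋m⦌) z) key).trans n2)

end MooreKan

open MooreKan in
/-- Every simplicial abelian group satisfies the Kan extension condition: every map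
of simplicial sets from a horn `Λ[n, k]` to the underlying simplicial set of a
simplicial abelian group extends over the full simplex `Δ[n]`. -/
theorem simplicial_abelian_group_is_kan (A : SimplicialObject AddCommGrpCat.{0}) :
    SSet.KanComplexOld
      (((SimplicialObject.whiskering AddCommGrpCat (Type)).obj (forget AddCommGrpCat)).obj A) := by
  constructor
  intro n i σ₀
  match n, i, σ₀ with
  | 0, i, σ₀ =>
    refine ⟨toHom _ (0 : ↥(A.obj (op ⦋0⦌))), ?_⟩
    apply NatTrans.ext
    funext m
    ext a
    have huniv : Set.range (stdSimplex.asOrderHom a.1) ∪ {i} = Set.univ :=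
      Set.eq_univ_iff_forall.mpr fun z => Or.inr (Subsingleton.elim (α := Fin 1) z i)
    exact (a.2 huniv).elim
  | 1, i, σ₀ =>
    obtain ⟨y, hy⟩ := filler1 A i (fun j hj => σ₀.app (op ⦋0⦌) (horn.face i j hj))
    refine ⟨toHom _ y, ?_⟩
    apply horn.hom_ext
    intro j hj
    exact ((hy j hj).symm).trans
      (toHom_face (((SimplicialObject.whiskering AddCommGrpCat (Type)).obj
        (forget AddCommGrpCat)).obj A) (n := 0) y i j hj).symm
  | (m + 2), i, σ₀ =>
    obtain ⟨y, hy⟩ := filler A i (fun j hj => σ₀.app (op ⦋m + 1⦌) (horn.face i j hj))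
      (horn_compat A i σ₀)
    refine ⟨toHom _ y, ?_⟩
    apply horn.hom_ext
    intro j hj
    exact ((hy j hj).symm).trans
      (toHom_face (((SimplicialObject.whiskering AddCommGrpCat (Type)).obj
        (forget AddCommGrpCat)).obj A) (n := m + 1) y i j hj).symm
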